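/- For all real numbers γ, β_p, β and every bounded measurable function g : ℝ → ℝ, the Gaussian-disorder analogue of the magnetization–overlap identity holds: ∫_{ℝ^E} w_J · (Σ_S g((1/N)·Σ_{v∈V} S(v)) · exp(β·H_J(S))) / Z_J(β) dμ(J) = ∫_{ℝ^E} w_J · (Σ_{S¹,S²} g((1/N)·Σ_{v∈V} S¹(v)·S²(v)) · exp(β·H_J(S¹) + β_p·H_J(S²))) / (Z_J(β)·Z_J(β_p)) dμ(J), where w_J = Z_J(γ)·exp(β_p·Σ_{e∈E} J(e)) / Z_J(β_p) and S¹, S² range independently over all spin configurations. -/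

import Mathlib

open Finset MeasureTheory ProbabilityTheory

/-- Gaussian-disorder Ising energy H_J(S), spins valued in the units of the integers. -/
noncomputable def isingHJ {V E : Type*} [Fintype E] (i j : E → V)
    (J : E → ℝ) (S : V → ℤˣ) : ℝ :=
  ∑ e, J e * ((S (i e) : ℤ) : ℝ) * ((S (j e) : ℤ) : ℝ)

/-- Gaussian-disorder partition function Z_J(β). -/
noncomputable def isingZJ {V E : Type*} [Fintype V] [DecidableEq V] [Fintype E]
    (i j : E → V) (β : ℝ) (J : E → ℝ) : ℝ :=
  ∑ S : V → ℤˣ, Real.exp (β * isingHJ i j J S)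

/-! ### Auxiliary lemmas -/

namespace Stmt18Aux

lemma usq (u : ℤˣ) : ((u : ℤ) : ℝ) * ((u : ℤ) : ℝ) = 1 := by
  rcases Int.units_eq_one_or u with h | h <;> simp [h]

lemma uabs (u : ℤˣ) : |((u : ℤ) : ℝ)| = 1 := by
  rcases Int.units_eq_one_or u with h | h <;> simp [h]

lemma ucast (a b : ℤˣ) : (((a * b : ℤˣ) : ℤ) : ℝ) = ((a : ℤ) : ℝ) * ((b : ℤ) : ℝ) := by
  rw [Units.val_mul, Int.cast_mul]

variable {V E : Type*} [Fintype V] [DecidableEq V] [Fintype E] [DecidableEq E]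

lemma isingZJ_pos (i j : E → V) (β : ℝ) (J : E → ℝ) : 0 < isingZJ i j β J :=
  Finset.sum_pos (fun S _ => Real.exp_pos _) ⟨fun _ => 1, Finset.mem_univ _⟩

lemma isingZJ_ne_zero (i j : E → V) (β : ℝ) (J : E → ℝ) : isingZJ i j β J ≠ 0 :=
  (isingZJ_pos i j β J).ne'

/-- The gauge transformation of the disorder. -/
noncomputable def gaugeJ (i j : E → V) (σ : V → ℤˣ) (J : E → ℝ) : E → ℝ :=
  fun e => (((σ (i e) : ℤ) : ℝ) * ((σ (j e) : ℤ) : ℝ)) * J e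

lemma mulσ_mulσ (σ S : V → ℤˣ) : (fun v => (S v * σ v) * σ v) = S := by
  funext v
  rw [mul_assoc, Int.units_mul_self, mul_one]

lemma mulσ_bijective (σ : V → ℤˣ) :
    Function.Bijective (fun S : V → ℤˣ => fun v => S v * σ v) :=
  Function.Involutive.bijective (fun S => mulσ_mulσ σ S)

/-- Reindexing the sum over spins by multiplication with a fixed spin. -/
lemma sum_spin_reindex (σ : V → ℤˣ) (f : (V → ℤˣ) → ℝ) :
    ∑ S : V → ℤˣ, f (fun v => S v * σ v) = ∑ S : V → ℤˣ, f S :=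
  Fintype.sum_bijective _ (mulσ_bijective σ) _ _ (fun S => rfl)

lemma gauge_H (i j : E → V) (σ : V → ℤˣ) (J : E → ℝ) (S : V → ℤˣ) :
    isingHJ i j (gaugeJ i j σ J) S = isingHJ i j J (fun v => S v * σ v) := by
  unfold isingHJ gaugeJ
  refine Finset.sum_congr rfl fun e _ => ?_
  rw [ucast, ucast]
  ring

lemma gauge_Z (i j : E → V) (σ : V → ℤˣ) (t : ℝ) (J : E → ℝ) :
    isingZJ i j t (gaugeJ i j σ J) = isingZJ i j t J := by
  unfold isingZJ
  simp_rw [gauge_H]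
  exact sum_spin_reindex σ (fun S => Real.exp (t * isingHJ i j J S))

lemma gauge_sum (i j : E → V) (σ : V → ℤˣ) (J : E → ℝ) :
    ∑ e, gaugeJ i j σ J e = isingHJ i j J σ := by
  unfold isingHJ gaugeJ
  refine Finset.sum_congr rfl fun e _ => ?_
  ring

/-- The gauge transformation as a measurable equivalence. -/
noncomputable def gaugeEquiv (i j : E → V) (σ : V → ℤˣ) : (E → ℝ) ≃ᵐ (E → ℝ) :=
  MeasurableEquiv.piCongrRight fun e =>
    (Homeomorph.mulLeft₀ ((((σ (i e) : ℤ) : ℝ) * ((σ (j e) : ℤ) : ℝ)))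
      (by
        rcases Int.units_eq_one_or (σ (i e)) with h | h <;>
          rcases Int.units_eq_one_or (σ (j e)) with h' | h' <;>
            simp [h, h'])).toMeasurableEquiv

lemma gaugeEquiv_coe (i j : E → V) (σ : V → ℤˣ) :
    ⇑(gaugeEquiv i j σ) = gaugeJ i j σ := rfl

lemma mp_coord (c : ℝ) (hc : c = 1 ∨ c = -1) :
    MeasurePreserving (fun x : ℝ => c * x) (gaussianReal 0 1) (gaussianReal 0 1) := by
  refine ⟨(measurable_id.const_mul c), ?_⟩
  have : (fun x : ℝ => c * x) = (c * ·) := rfl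
  rw [this, gaussianReal_map_const_mul]
  have h2 : (⟨c ^ 2, sq_nonneg c⟩ : NNReal) = 1 := by
    ext
    rcases hc with h | h <;> simp [h]
  rw [mul_zero]
  congr 1
  ext
  rcases hc with h | h <;> simp [h]

lemma mp_gauge (i j : E → V) (σ : V → ℤˣ) :
    MeasurePreserving (gaugeJ i j σ) (Measure.pi fun _ : E => gaussianReal 0 1)
      (Measure.pi fun _ : E => gaussianReal 0 1) := by
  refine measurePreserving_pi _ _ (fun e => mp_coord _ ?_)
  rcases Int.units_eq_one_or (σ (i e)) with h | h <;>
    rcases Int.units_eq_one_or (σ (j e)) with h' | h' <;>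
      simp [h, h']

lemma gauge_integral_comp (i j : E → V) (σ : V → ℤˣ) (F : (E → ℝ) → ℝ) :
    ∫ J : E → ℝ, F (gaugeJ i j σ J) ∂(Measure.pi fun _ : E => gaussianReal 0 1)
      = ∫ J : E → ℝ, F J ∂(Measure.pi fun _ : E => gaussianReal 0 1) := by
  rw [← gaugeEquiv_coe]
  exact (mp_gauge i j σ).integral_comp
    ((gaugeEquiv i j σ).measurableEmbedding) F

lemma gauge_integrable_comp (i j : E → V) (σ : V → ℤˣ) (F : (E → ℝ) → ℝ)
    (hF : Integrable F (Measure.pi fun _ : E => gaussianReal 0 1)) :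
    Integrable (fun J => F (gaugeJ i j σ J))
      (Measure.pi fun _ : E => gaussianReal 0 1) := by
  have := ((mp_gauge i j σ).integrable_comp_emb
    (by rw [← gaugeEquiv_coe i j σ]; exact (gaugeEquiv i j σ).measurableEmbedding)
    (g := F)).mpr hF
  exact this

/-! ### Integrability of the dominating function -/

lemma integrable_exp_mul_gaussian (t : ℝ) :
    Integrable (fun x : ℝ => Real.exp (t * x)) (gaussianReal 0 1) := by
  rw [gaussianReal_of_var_ne_zero _ one_ne_zero,
    integrable_withDensity_iff (measurable_gaussianPDF _ _)
      (Filter.Eventually.of_forall fun x => ENNReal.ofReal_lt_top)]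
  have hpt : ∀ x : ℝ, (gaussianPDF 0 1 x).toReal = gaussianPDFReal 0 1 x := fun x =>
    ENNReal.toReal_ofReal (gaussianPDFReal_nonneg 0 1 x)
  simp only [hpt]
  have heq : (fun x : ℝ => Real.exp (t * x) * gaussianPDFReal 0 1 x)
      = fun x : ℝ => ((Real.sqrt (2 * Real.pi * ((1 : NNReal) : ℝ)))⁻¹ * Real.exp (t ^ 2 / 2))
          * Real.exp (-(1 / 2) * (x - t) ^ 2) := by
    have merge1 : ∀ (c a b : ℝ), Real.exp a * (c * Real.exp b) = c * Real.exp (a + b) := by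
      intro c a b; rw [mul_left_comm, ← Real.exp_add]
    have merge2 : ∀ (c a b : ℝ), c * Real.exp a * Real.exp b = c * Real.exp (a + b) := by
      intro c a b; rw [mul_assoc, ← Real.exp_add]
    funext x
    rw [gaussianPDFReal, merge1, merge2]
    congr 1
    push_cast
    ring
  rw [heq]
  exact ((integrable_exp_neg_mul_sq (by norm_num : (0:ℝ) < 1/2)).comp_sub_right t).const_mul _

lemma integrable_exp_mul_abs_gaussian (t : ℝ) :
    Integrable (fun x : ℝ => Real.exp (t * |x|)) (gaussianReal 0 1) := by
  refine ((integrable_exp_mul_gaussian t).add (integrable_exp_mul_gaussian (-t))).mono'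
    ((measurable_abs.const_mul t).exp.aestronglyMeasurable) ?_
  filter_upwards with x
  rw [Real.norm_eq_abs, abs_of_pos (Real.exp_pos _)]
  rcases abs_cases x with ⟨h1, _⟩ | ⟨h1, _⟩
  · rw [h1]
    exact le_add_of_nonneg_right (Real.exp_pos _).le
  · rw [h1, mul_neg, ← neg_mul]
    exact le_add_of_nonneg_left (Real.exp_pos _).le

lemma integrable_bound (c : ℝ) :
    Integrable (fun J : E → ℝ => Real.exp (c * ∑ e, |J e|))
      (Measure.pi fun _ : E => gaussianReal 0 1) := by
  letI : MeasureSpace ℝ := ⟨gaussianReal 0 1⟩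
  haveI : SigmaFinite (volume : Measure ℝ) := by
    change SigmaFinite (gaussianReal 0 1); infer_instance
  have h : Integrable (fun J : E → ℝ => ∏ e, Real.exp (c * |J e|)) :=
    Integrable.fintype_prod (f := fun _ x => Real.exp (c * |x|))
      (fun _ => integrable_exp_mul_abs_gaussian c)
  have heq : (fun J : E → ℝ => Real.exp (c * ∑ e, |J e|))
      = fun J : E → ℝ => ∏ e, Real.exp (c * |J e|) := by
    funext J
    rw [Finset.mul_sum, Real.exp_sum]
  rw [heq]
  exact h

/-! ### Measurability -/

lemma measurable_H (i j : E → V) (S : V → ℤˣ) :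
    Measurable (fun J : E → ℝ => isingHJ i j J S) := by
  unfold isingHJ
  exact Finset.measurable_sum _ fun e _ =>
    ((measurable_pi_apply e).mul_const _).mul_const _

lemma measurable_Z (i j : E → V) (t : ℝ) :
    Measurable (fun J : E → ℝ => isingZJ i j t J) := by
  unfold isingZJ
  exact Finset.measurable_sum _ fun S _ => ((measurable_H i j S).const_mul t).exp

/-! ### Bounds -/

lemma abs_H_le (i j : E → V) (J : E → ℝ) (S : V → ℤˣ) :
    |isingHJ i j J S| ≤ ∑ e, |J e| := by
  refine (Finset.abs_sum_le_sum_abs _ _).trans ?_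
  refine Finset.sum_le_sum fun e _ => ?_
  rw [abs_mul, abs_mul, uabs, uabs, mul_one, mul_one]

lemma Z_le (i j : E → V) (t : ℝ) (J : E → ℝ) :
    isingZJ i j t J ≤ (Fintype.card (V → ℤˣ) : ℝ) * Real.exp (|t| * ∑ e, |J e|) := by
  unfold isingZJ
  calc ∑ S : V → ℤˣ, Real.exp (t * isingHJ i j J S)
      ≤ ∑ _S : V → ℤˣ, Real.exp (|t| * ∑ e, |J e|) := by
        refine Finset.sum_le_sum fun S _ => Real.exp_le_exp.mpr ?_
        calc t * isingHJ i j J S ≤ |t * isingHJ i j J S| := le_abs_self _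
          _ = |t| * |isingHJ i j J S| := abs_mul _ _
          _ ≤ |t| * ∑ e, |J e| :=
              mul_le_mul_of_nonneg_left (abs_H_le i j J S) (abs_nonneg t)
    _ = (Fintype.card (V → ℤˣ) : ℝ) * Real.exp (|t| * ∑ e, |J e|) := by
        rw [Finset.sum_const, nsmul_eq_mul, Finset.card_univ]

lemma exp_sum_le_Z (i j : E → V) (t : ℝ) (J : E → ℝ) :
    Real.exp (t * ∑ e, J e) ≤ isingZJ i j t J := by
  have h : isingHJ i j J (fun _ => 1) = ∑ e, J e := by
    unfold isingHJ
    simp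
  calc Real.exp (t * ∑ e, J e) = Real.exp (t * isingHJ i j J (fun _ => 1)) := by rw [h]
    _ ≤ isingZJ i j t J :=
      Finset.single_le_sum (f := fun S : V → ℤˣ => Real.exp (t * isingHJ i j J S))
        (fun S _ => (Real.exp_pos _).le) (Finset.mem_univ _)

lemma w_nonneg (i j : E → V) (γ βp : ℝ) (J : E → ℝ) :
    0 ≤ isingZJ i j γ J * Real.exp (βp * ∑ e, J e) / isingZJ i j βp J :=
  div_nonneg (mul_nonneg (isingZJ_pos i j γ J).le (Real.exp_pos _).le)
    (isingZJ_pos i j βp J).le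

lemma w_le (i j : E → V) (γ βp : ℝ) (J : E → ℝ) :
    isingZJ i j γ J * Real.exp (βp * ∑ e, J e) / isingZJ i j βp J
      ≤ (Fintype.card (V → ℤˣ) : ℝ) * Real.exp (|γ| * ∑ e, |J e|) := by
  rw [div_le_iff₀ (isingZJ_pos i j βp J)]
  calc isingZJ i j γ J * Real.exp (βp * ∑ e, J e)
      ≤ isingZJ i j γ J * isingZJ i j βp J :=
        mul_le_mul_of_nonneg_left (exp_sum_le_Z i j βp J) (isingZJ_pos i j γ J).le
    _ ≤ ((Fintype.card (V → ℤˣ) : ℝ) * Real.exp (|γ| * ∑ e, |J e|)) * isingZJ i j βp J :=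
        mul_le_mul_of_nonneg_right (Z_le i j γ J) (isingZJ_pos i j βp J).le

end Stmt18Aux

open Stmt18Aux in
/-- Gaussian-disorder magnetization-overlap identity. -/
theorem stmt_18 {V E : Type*} [Fintype V] [DecidableEq V] [Fintype E] [DecidableEq E]
    (i j : E → V) (hij : ∀ e, i e ≠ j e)
    (γ βp β : ℝ) (g : ℝ → ℝ) (hmeas : Measurable g) (hbdd : ∃ C, ∀ x, |g x| ≤ C) :
    ∫ J : E → ℝ,
        (isingZJ i j γ J * Real.exp (βp * ∑ e, J e) / isingZJ i j βp J) *
          ((∑ S : V → ℤˣ,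
              g ((1 / (Fintype.card V : ℝ)) * ∑ v, ((S v : ℤ) : ℝ)) *
                Real.exp (β * isingHJ i j J S)) / isingZJ i j β J)
        ∂(Measure.pi fun _ : E => gaussianReal 0 1)
      = ∫ J : E → ℝ,
          (isingZJ i j γ J * Real.exp (βp * ∑ e, J e) / isingZJ i j βp J) *
            ((∑ S1 : V → ℤˣ, ∑ S2 : V → ℤˣ,
                g ((1 / (Fintype.card V : ℝ)) * ∑ v, ((S1 v : ℤ) : ℝ) * ((S2 v : ℤ) : ℝ)) *
                  Real.exp (β * isingHJ i j J S1 + βp * isingHJ i j J S2)) /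
              (isingZJ i j β J * isingZJ i j βp J))
          ∂(Measure.pi fun _ : E => gaussianReal 0 1) := by
  classical
  obtain ⟨C, hC⟩ := hbdd
  have hC0 : 0 ≤ C := (abs_nonneg (g 0)).trans (hC 0)
  set μ : Measure (E → ℝ) := Measure.pi fun _ : E => gaussianReal 0 1 with hμ
  set F : (E → ℝ) → ℝ := fun J =>
    (isingZJ i j γ J * Real.exp (βp * ∑ e, J e) / isingZJ i j βp J) *
      ((∑ S : V → ℤˣ,
          g ((1 / (Fintype.card V : ℝ)) * ∑ v, ((S v : ℤ) : ℝ)) *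
            Real.exp (β * isingHJ i j J S)) / isingZJ i j β J) with hF
  set G : (E → ℝ) → ℝ := fun J =>
    (isingZJ i j γ J * Real.exp (βp * ∑ e, J e) / isingZJ i j βp J) *
      ((∑ S1 : V → ℤˣ, ∑ S2 : V → ℤˣ,
          g ((1 / (Fintype.card V : ℝ)) * ∑ v, ((S1 v : ℤ) : ℝ) * ((S2 v : ℤ) : ℝ)) *
            Real.exp (β * isingHJ i j J S1 + βp * isingHJ i j J S2)) /
        (isingZJ i j β J * isingZJ i j βp J)) with hG
  -- measurability of the integrands
  have hwmeas : Measurable (fun J : E → ℝ =>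
      isingZJ i j γ J * Real.exp (βp * ∑ e, J e) / isingZJ i j βp J) :=
    ((measurable_Z i j γ).mul
      ((Finset.measurable_sum Finset.univ fun e _ =>
        measurable_pi_apply e).const_mul βp).exp).div (measurable_Z i j βp)
  have hFmeas : Measurable F := by
    refine hwmeas.mul (Measurable.div ?_ (measurable_Z i j β))
    exact Finset.measurable_sum _ fun S _ =>
      (((measurable_H i j S).const_mul β).exp).const_mul _
  have hGmeas : Measurable G := by
    refine hwmeas.mul (Measurable.div ?_ ((measurable_Z i j β).mul (measurable_Z i j βp)))
    refine Finset.measurable_sum _ fun S1 _ => ?_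
    refine Finset.measurable_sum _ fun S2 _ => ?_
    exact (((measurable_H i j S1).const_mul β).add
      ((measurable_H i j S2).const_mul βp)).exp.const_mul _
  -- the dominating function
  have hbound : Integrable
      (fun J : E → ℝ => C * (Fintype.card (V → ℤˣ) : ℝ) * Real.exp (|γ| * ∑ e, |J e|)) μ :=
    (integrable_bound |γ|).const_mul _
  -- bound for F
  have hFle : ∀ J : E → ℝ, ‖F J‖ ≤
      C * (Fintype.card (V → ℤˣ) : ℝ) * Real.exp (|γ| * ∑ e, |J e|) := by
    intro J
    have hZβ := isingZJ_pos i j β J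
    have hinner : |(∑ S : V → ℤˣ,
        g ((1 / (Fintype.card V : ℝ)) * ∑ v, ((S v : ℤ) : ℝ)) *
          Real.exp (β * isingHJ i j J S)) / isingZJ i j β J| ≤ C := by
      rw [abs_div, abs_of_pos hZβ, div_le_iff₀ hZβ]
      calc |∑ S : V → ℤˣ,
          g ((1 / (Fintype.card V : ℝ)) * ∑ v, ((S v : ℤ) : ℝ)) *
            Real.exp (β * isingHJ i j J S)|
          ≤ ∑ S : V → ℤˣ, C * Real.exp (β * isingHJ i j J S) := by
            refine (Finset.abs_sum_le_sum_abs _ _).trans (Finset.sum_le_sum fun S _ => ?_)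
            rw [abs_mul, abs_of_pos (Real.exp_pos _)]
            exact mul_le_mul_of_nonneg_right (hC _) (Real.exp_pos _).le
        _ = C * isingZJ i j β J := by rw [← Finset.mul_sum]; rfl
    rw [hF]
    simp only [Real.norm_eq_abs]
    rw [abs_mul, abs_of_nonneg (w_nonneg i j γ βp J)]
    calc (isingZJ i j γ J * Real.exp (βp * ∑ e, J e) / isingZJ i j βp J) * |_|
        ≤ ((Fintype.card (V → ℤˣ) : ℝ) * Real.exp (|γ| * ∑ e, |J e|)) * C := by
          exact mul_le_mul (w_le i j γ βp J) hinner (abs_nonneg _)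
            (by positivity)
      _ = C * (Fintype.card (V → ℤˣ) : ℝ) * Real.exp (|γ| * ∑ e, |J e|) := by ring
  -- bound for G
  have hGle : ∀ J : E → ℝ, ‖G J‖ ≤
      C * (Fintype.card (V → ℤˣ) : ℝ) * Real.exp (|γ| * ∑ e, |J e|) := by
    intro J
    have hZβ := isingZJ_pos i j β J
    have hZβp := isingZJ_pos i j βp J
    have hZZ : (0:ℝ) < isingZJ i j β J * isingZJ i j βp J := mul_pos hZβ hZβp
    have hinner : |(∑ S1 : V → ℤˣ, ∑ S2 : V → ℤˣ,
        g ((1 / (Fintype.card V : ℝ)) * ∑ v, ((S1 v : ℤ) : ℝ) * ((S2 v : ℤ) : ℝ)) *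
          Real.exp (β * isingHJ i j J S1 + βp * isingHJ i j J S2)) /
        (isingZJ i j β J * isingZJ i j βp J)| ≤ C := by
      rw [abs_div, abs_of_pos hZZ, div_le_iff₀ hZZ]
      calc |∑ S1 : V → ℤˣ, ∑ S2 : V → ℤˣ,
          g ((1 / (Fintype.card V : ℝ)) * ∑ v, ((S1 v : ℤ) : ℝ) * ((S2 v : ℤ) : ℝ)) *
            Real.exp (β * isingHJ i j J S1 + βp * isingHJ i j J S2)|
          ≤ ∑ S1 : V → ℤˣ, ∑ S2 : V → ℤˣ,
              C * Real.exp (β * isingHJ i j J S1 + βp * isingHJ i j J S2) := by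
            refine (Finset.abs_sum_le_sum_abs _ _).trans (Finset.sum_le_sum fun S1 _ => ?_)
            refine (Finset.abs_sum_le_sum_abs _ _).trans (Finset.sum_le_sum fun S2 _ => ?_)
            rw [abs_mul, abs_of_pos (Real.exp_pos _)]
            exact mul_le_mul_of_nonneg_right (hC _) (Real.exp_pos _).le
        _ = C * (isingZJ i j β J * isingZJ i j βp J) := by
            simp_rw [Real.exp_add, ← Finset.mul_sum, ← Finset.sum_mul]
            unfold isingZJ
            ring
    rw [hG]
    simp only [Real.norm_eq_abs]
    rw [abs_mul, abs_of_nonneg (w_nonneg i j γ βp J)]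
    calc (isingZJ i j γ J * Real.exp (βp * ∑ e, J e) / isingZJ i j βp J) * |_|
        ≤ ((Fintype.card (V → ℤˣ) : ℝ) * Real.exp (|γ| * ∑ e, |J e|)) * C :=
          mul_le_mul (w_le i j γ βp J) hinner (abs_nonneg _) (by positivity)
      _ = C * (Fintype.card (V → ℤˣ) : ℝ) * Real.exp (|γ| * ∑ e, |J e|) := by ring
  have hFint : Integrable F μ :=
    hbound.mono' hFmeas.aestronglyMeasurable (Filter.Eventually.of_forall hFle)
  have hGint : Integrable G μ :=
    hbound.mono' hGmeas.aestronglyMeasurable (Filter.Eventually.of_forall hGle)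
  -- explicit form of the gauged integrands
  have hFgauge : ∀ (σ : V → ℤˣ) (J : E → ℝ),
      F (gaugeJ i j σ J) =
        (isingZJ i j γ J / (isingZJ i j βp J * isingZJ i j β J)) *
          ∑ S1 : V → ℤˣ,
            g ((1 / (Fintype.card V : ℝ)) * ∑ v, ((S1 v : ℤ) : ℝ) * ((σ v : ℤ) : ℝ)) *
              Real.exp (β * isingHJ i j J S1 + βp * isingHJ i j J σ) := by
    intro σ J
    rw [hF]
    simp only [gauge_Z, gauge_sum, gauge_H]
    have hre : ∑ S : V → ℤˣ,
        g ((1 / (Fintype.card V : ℝ)) * ∑ v, ((S v : ℤ) : ℝ)) *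
          Real.exp (β * isingHJ i j J (fun v => S v * σ v))
        = ∑ S1 : V → ℤˣ,
            g ((1 / (Fintype.card V : ℝ)) * ∑ v, ((S1 v : ℤ) : ℝ) * ((σ v : ℤ) : ℝ)) *
              Real.exp (β * isingHJ i j J S1) := by
      refine Fintype.sum_bijective (fun S : V → ℤˣ => fun v => S v * σ v)
        (mulσ_bijective σ) _ _ ?_
      intro S
      have harg : ∑ v, ((S v : ℤ) : ℝ)
          = ∑ v, (((S v * σ v : ℤˣ) : ℤ) : ℝ) * ((σ v : ℤ) : ℝ) := by
        refine Finset.sum_congr rfl fun v _ => ?_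
        rw [ucast, mul_assoc, usq, mul_one]
      simp only [harg]
    rw [hre]
    have h1 := isingZJ_ne_zero i j βp J
    have h2 := isingZJ_ne_zero i j β J
    simp_rw [Real.exp_add, ← mul_assoc, ← Finset.sum_mul]
    field_simp
  have hGgauge : ∀ (σ : V → ℤˣ) (J : E → ℝ),
      G (gaugeJ i j σ J) =
        (isingZJ i j γ J / (isingZJ i j βp J * isingZJ i j β J)) *
          ((Real.exp (βp * isingHJ i j J σ) / isingZJ i j βp J) *
            ∑ S1 : V → ℤˣ, ∑ S2 : V → ℤˣ,
              g ((1 / (Fintype.card V : ℝ)) * ∑ v, ((S1 v : ℤ) : ℝ) * ((S2 v : ℤ) : ℝ)) *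
                Real.exp (β * isingHJ i j J S1 + βp * isingHJ i j J S2)) := by
    intro σ J
    rw [hG]
    simp only [gauge_Z, gauge_sum, gauge_H]
    have hre : ∑ S1 : V → ℤˣ, ∑ S2 : V → ℤˣ,
        g ((1 / (Fintype.card V : ℝ)) * ∑ v, ((S1 v : ℤ) : ℝ) * ((S2 v : ℤ) : ℝ)) *
          Real.exp (β * isingHJ i j J (fun v => S1 v * σ v)
            + βp * isingHJ i j J (fun v => S2 v * σ v))
        = ∑ S1 : V → ℤˣ, ∑ S2 : V → ℤˣ,
            g ((1 / (Fintype.card V : ℝ)) * ∑ v, ((S1 v : ℤ) : ℝ) * ((S2 v : ℤ) : ℝ)) *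
              Real.exp (β * isingHJ i j J S1 + βp * isingHJ i j J S2) := by
      refine Fintype.sum_bijective (fun S : V → ℤˣ => fun v => S v * σ v)
        (mulσ_bijective σ) _ _ ?_
      intro S1
      refine Fintype.sum_bijective (fun S : V → ℤˣ => fun v => S v * σ v)
        (mulσ_bijective σ) _ _ ?_
      intro S2
      have harg : ∑ v, ((S1 v : ℤ) : ℝ) * ((S2 v : ℤ) : ℝ)
          = ∑ v, (((S1 v * σ v : ℤˣ) : ℤ) : ℝ) * (((S2 v * σ v : ℤˣ) : ℤ) : ℝ) := by
        refine Finset.sum_congr rfl fun v _ => ?_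
        rw [ucast, ucast]
        have hs := usq (σ v)
        linear_combination (-(((S1 v : ℤ) : ℝ) * ((S2 v : ℤ) : ℝ))) * hs
      simp only [harg]
    rw [hre]
    have h1 := isingZJ_ne_zero i j βp J
    have h2 := isingZJ_ne_zero i j β J
    field_simp
  -- the key pointwise identity
  have key : ∀ J : E → ℝ,
      ∑ σ : V → ℤˣ, F (gaugeJ i j σ J) = ∑ σ : V → ℤˣ, G (gaugeJ i j σ J) := by
    intro J
    have hZβp := isingZJ_ne_zero i j βp J
    calc ∑ σ : V → ℤˣ, F (gaugeJ i j σ J)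
        = (isingZJ i j γ J / (isingZJ i j βp J * isingZJ i j β J)) *
            ∑ σ : V → ℤˣ, ∑ S1 : V → ℤˣ,
              g ((1 / (Fintype.card V : ℝ)) * ∑ v, ((S1 v : ℤ) : ℝ) * ((σ v : ℤ) : ℝ)) *
                Real.exp (β * isingHJ i j J S1 + βp * isingHJ i j J σ) := by
          rw [Finset.mul_sum]
          exact Finset.sum_congr rfl fun σ _ => hFgauge σ J
      _ = (isingZJ i j γ J / (isingZJ i j βp J * isingZJ i j β J)) *
            ∑ S1 : V → ℤˣ, ∑ S2 : V → ℤˣ,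
              g ((1 / (Fintype.card V : ℝ)) * ∑ v, ((S1 v : ℤ) : ℝ) * ((S2 v : ℤ) : ℝ)) *
                Real.exp (β * isingHJ i j J S1 + βp * isingHJ i j J S2) := by
          rw [Finset.sum_comm]
      _ = ∑ σ : V → ℤˣ, G (gaugeJ i j σ J) := by
          rw [Finset.sum_congr rfl fun σ _ => hGgauge σ J]
          rw [← Finset.mul_sum, ← Finset.sum_mul, ← Finset.sum_div]
          have hZ : ∑ σ : V → ℤˣ, Real.exp (βp * isingHJ i j J σ) = isingZJ i j βp J := rfl
          rw [hZ, div_self hZβp, one_mul]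
  -- assembling everything
  have hcard : ((Fintype.card (V → ℤˣ) : ℝ)) ≠ 0 := by
    exact_mod_cast Fintype.card_ne_zero
  have hFcomp : ∀ σ : V → ℤˣ, ∫ J, F (gaugeJ i j σ J) ∂μ = ∫ J, F J ∂μ :=
    fun σ => gauge_integral_comp i j σ F
  have hGcomp : ∀ σ : V → ℤˣ, ∫ J, G (gaugeJ i j σ J) ∂μ = ∫ J, G J ∂μ :=
    fun σ => gauge_integral_comp i j σ G
  have hmain : (Fintype.card (V → ℤˣ) : ℝ) * ∫ J, F J ∂μ
      = (Fintype.card (V → ℤˣ) : ℝ) * ∫ J, G J ∂μ := by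
    calc (Fintype.card (V → ℤˣ) : ℝ) * ∫ J, F J ∂μ
        = ∑ σ : V → ℤˣ, ∫ J, F (gaugeJ i j σ J) ∂μ := by
          rw [Finset.sum_congr rfl fun σ _ => hFcomp σ, Finset.sum_const, nsmul_eq_mul,
            Finset.card_univ]
      _ = ∫ J, ∑ σ : V → ℤˣ, F (gaugeJ i j σ J) ∂μ := by
          rw [integral_finset_sum]
          exact fun σ _ => gauge_integrable_comp i j σ F hFint
      _ = ∫ J, ∑ σ : V → ℤˣ, G (gaugeJ i j σ J) ∂μ := by
          exact integral_congr_ae (Filter.Eventually.of_forall key)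
      _ = ∑ σ : V → ℤˣ, ∫ J, G (gaugeJ i j σ J) ∂μ := by
          rw [integral_finset_sum]
          exact fun σ _ => gauge_integrable_comp i j σ G hGint
      _ = (Fintype.card (V → ℤˣ) : ℝ) * ∫ J, G J ∂μ := by
          rw [Finset.sum_congr rfl fun σ _ => hGcomp σ, Finset.sum_const, nsmul_eq_mul,
            Finset.card_univ]
  exact mul_left_cancel₀ hcard hmain
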